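/- Let c₀ and z be the sharp sub-Gaussian comparison parameters, and let G be a standard normal random variable. For every c with 0 < c < c₀ there exists an integrable random variable X⋆ with E[X⋆] = 0 and P(|X⋆| > t) ≤ min{1, 2·e^{-t²/2}} for all t ≥ 0 such that, taking the convex function f(x) = max(x − c·z, 0), one has E[f(X⋆)] > E[f(c·G)]. Hence no constant smaller than c₀ suffices for the convex domination of all such X by c·G. -/

import Mathlib

open MeasureTheory ProbabilityTheory Real Set Filter
open scoped NNReal ENNReal

/-- The standard normal density `φ(x) = (2π)^{-1/2} e^{-x²/2}`. -/
noncomputable def stdNormalPDF (x : ℝ) : ℝ :=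
  (Real.sqrt (2 * Real.pi))⁻¹ * Real.exp (-x ^ 2 / 2)

/-- The Gaussian tail `Φ̄(x) = ∫_x^∞ φ(t) dt`. -/
noncomputable def gaussTail (x : ℝ) : ℝ := ∫ t in Set.Ioi x, stdNormalPDF t

/-- `B = A/2`, where `A = t₀ + 2 ∫_{t₀}^∞ e^{-t²/2} dt` and `t₀ = √(2 log 2)`. -/
noncomputable def Bconst : ℝ :=
  Real.sqrt (2 * Real.log 2) / 2 +
    ∫ t in Set.Ioi (Real.sqrt (2 * Real.log 2)), Real.exp (-t ^ 2 / 2)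

/-- `H(x) = 2x e^{-x²/2} + 2 ∫_x^∞ e^{-t²/2} dt`. -/
noncomputable def Hfun (x : ℝ) : ℝ :=
  2 * x * Real.exp (-x ^ 2 / 2) + 2 * ∫ t in Set.Ioi x, Real.exp (-t ^ 2 / 2)

noncomputable def sgT0 : ℝ := Real.sqrt (2 * Real.log 2)

lemma sg_log_two_gt_half : (1/2 : ℝ) < Real.log 2 := by
  have := Real.log_two_gt_d9; linarith

lemma sgT0_sq : sgT0 ^ 2 = 2 * Real.log 2 :=
  Real.sq_sqrt (by have := sg_log_two_gt_half; linarith)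

lemma one_lt_sgT0 : 1 < sgT0 := by
  have h := sg_log_two_gt_half
  have : (1:ℝ) = Real.sqrt 1 := (Real.sqrt_one).symm
  rw [sgT0, this]
  exact Real.sqrt_lt_sqrt (by norm_num) (by linarith)

lemma sgT0_pos : 0 < sgT0 := lt_trans zero_lt_one one_lt_sgT0

lemma sg_exp_t0 : Real.exp (-sgT0 ^ 2 / 2) = 1/2 := by
  rw [sgT0_sq, show -(2 * Real.log 2)/2 = -Real.log 2 by ring, Real.exp_neg,
    Real.exp_log two_pos]
  norm_num

lemma sg_int_exp : Integrable (fun x : ℝ => Real.exp (-x ^ 2 / 2)) := by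
  have h := integrable_exp_neg_mul_sq (b := (1:ℝ)/2) (by norm_num)
  refine h.congr (Eventually.of_forall fun x => ?_)
  show Real.exp (-(1/2) * x ^ 2) = Real.exp (-x ^ 2 / 2)
  congr 1; ring

lemma sg_int_xexp : Integrable (fun x : ℝ => x * Real.exp (-x ^ 2 / 2)) := by
  have h := integrable_mul_exp_neg_mul_sq (b := (1:ℝ)/2) (by norm_num)
  refine h.congr (Eventually.of_forall fun x => ?_)
  show x * Real.exp (-(1/2) * x ^ 2) = x * Real.exp (-x ^ 2 / 2)
  congr 2; ring

lemma sg_int_x2exp : Integrable (fun x : ℝ => x ^ 2 * Real.exp (-x ^ 2 / 2)) := by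
  have h := integrable_rpow_mul_exp_neg_mul_sq (b := (1:ℝ)/2) (by norm_num) (s := 2)
    (by norm_num)
  refine h.congr (Eventually.of_forall fun x => ?_)
  show x ^ (2:ℝ) * Real.exp (-(1/2) * x ^ 2) = x ^ 2 * Real.exp (-x ^ 2 / 2)
  rw [show ((2:ℝ)) = ((2:ℕ):ℝ) by norm_num, Real.rpow_natCast]
  congr 2; ring

lemma sg_int_absxexp : Integrable (fun x : ℝ => |x| * Real.exp (-x ^ 2 / 2)) := by
  refine sg_int_xexp.abs.congr (Eventually.of_forall fun x => ?_)
  show |x * Real.exp (-x ^ 2 / 2)| = |x| * Real.exp (-x ^ 2 / 2)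
  rw [abs_mul, abs_of_pos (Real.exp_pos _)]

lemma sg_tendsto_exp : Tendsto (fun x : ℝ => Real.exp (-x ^ 2 / 2)) atTop (nhds 0) := by
  apply Real.tendsto_exp_atBot.comp
  have h : Tendsto (fun x : ℝ => x ^ 2 / 2) atTop atTop :=
    (tendsto_pow_atTop (by norm_num)).atTop_div_const (by norm_num)
  simpa [neg_div] using tendsto_neg_atBot_iff.mpr h

lemma sg_tendsto_xexp : Tendsto (fun x : ℝ => x * Real.exp (-x ^ 2 / 2)) atTop (nhds 0) := by
  have h1 : Tendsto (fun x : ℝ => (x ^ 2 / 2) * Real.exp (-(x ^ 2 / 2))) atTop (nhds 0) := by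
    have := tendsto_pow_mul_exp_neg_atTop_nhds_zero 1
    have h2 : Tendsto (fun x : ℝ => x ^ 2 / 2) atTop atTop :=
      (tendsto_pow_atTop (by norm_num)).atTop_div_const (by norm_num)
    simpa [Function.comp_def] using this.comp h2
  refine squeeze_zero' ?_ ?_ h1
  · filter_upwards [eventually_ge_atTop (0:ℝ)] with x hx
    positivity
  · filter_upwards [eventually_ge_atTop (2:ℝ)] with x hx
    have hx0 : (0:ℝ) ≤ x := by linarith
    have : x ≤ x ^ 2 / 2 := by nlinarith
    have h3 : Real.exp (-(x ^ 2 / 2)) = Real.exp (-x ^ 2 / 2) := by congr 1; ring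
    rw [h3]
    exact mul_le_mul_of_nonneg_right this (Real.exp_pos _).le

lemma sg_hasDeriv_exp (x : ℝ) :
    HasDerivAt (fun t : ℝ => Real.exp (-t ^ 2 / 2)) (-x * Real.exp (-x ^ 2 / 2)) x := by
  have h1 : HasDerivAt (fun t : ℝ => -t ^ 2 / 2) (-x) x := by
    have := ((hasDerivAt_pow 2 x).neg).div_const 2
    refine this.congr_deriv ?_
    simp; ring
  have := h1.exp
  convert this using 1
  ring

lemma sg_I1 (b : ℝ) : ∫ t in Ioi b, 2 * t * Real.exp (-t ^ 2 / 2) = 2 * Real.exp (-b ^ 2 / 2) := by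
  have h := integral_Ioi_of_hasDerivAt_of_tendsto
    (f := fun t : ℝ => -2 * Real.exp (-t ^ 2 / 2))
    (f' := fun t : ℝ => 2 * t * Real.exp (-t ^ 2 / 2)) (a := b) (m := 0)
    ((by fun_prop : Continuous fun t : ℝ => -2 * Real.exp (-t ^ 2 / 2)).continuousWithinAt) ?_ ?_ ?_
  · rw [h]; ring
  · intro x _
    have := (sg_hasDeriv_exp x).const_mul (-2)
    refine this.congr_deriv ?_; ring
  · have he : (fun t : ℝ => 2 * t * Real.exp (-t ^ 2 / 2))
        = fun t : ℝ => 2 * (t * Real.exp (-t ^ 2 / 2)) := by funext t; ring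
    rw [he]; exact (sg_int_xexp.const_mul 2).integrableOn
  · simpa using sg_tendsto_exp.const_mul (-2)

lemma sg_I2 (b : ℝ) : ∫ t in Ioi b, 2 * t ^ 2 * Real.exp (-t ^ 2 / 2)
    = 2 * b * Real.exp (-b ^ 2 / 2) + 2 * ∫ t in Ioi b, Real.exp (-t ^ 2 / 2) := by
  have hint2 : IntegrableOn (fun t : ℝ => 2 * t ^ 2 * Real.exp (-t ^ 2 / 2)) (Ioi b) :=
    by
      have he : (fun t : ℝ => 2 * t ^ 2 * Real.exp (-t ^ 2 / 2))
          = fun t : ℝ => 2 * (t ^ 2 * Real.exp (-t ^ 2 / 2)) := by funext t; ring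
      rw [he]; exact (sg_int_x2exp.const_mul 2).integrableOn
  have hinte : IntegrableOn (fun t : ℝ => 2 * Real.exp (-t ^ 2 / 2)) (Ioi b) :=
    (sg_int_exp.const_mul 2).integrableOn
  have h := integral_Ioi_of_hasDerivAt_of_tendsto
    (f := fun t : ℝ => -2 * t * Real.exp (-t ^ 2 / 2))
    (f' := fun t : ℝ => 2 * t ^ 2 * Real.exp (-t ^ 2 / 2) - 2 * Real.exp (-t ^ 2 / 2))
    (a := b) (m := 0)
    ((by fun_prop : Continuous fun t : ℝ => -2 * t * Real.exp (-t ^ 2 / 2)).continuousWithinAt)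
    ?_ ?_ ?_
  · have h2 : ∫ t in Ioi b, (2 * t ^ 2 * Real.exp (-t ^ 2 / 2) - 2 * Real.exp (-t ^ 2 / 2))
        = (∫ t in Ioi b, 2 * t ^ 2 * Real.exp (-t ^ 2 / 2))
          - ∫ t in Ioi b, 2 * Real.exp (-t ^ 2 / 2) := integral_sub hint2 hinte
    rw [h2] at h
    have h3 : ∫ t in Ioi b, 2 * Real.exp (-t ^ 2 / 2)
        = 2 * ∫ t in Ioi b, Real.exp (-t ^ 2 / 2) := integral_const_mul _ _
    rw [h3] at h
    linarith [h]
  · intro x _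
    have h1 : HasDerivAt (fun t : ℝ => -2 * t) (-2) x := by
      simpa using (hasDerivAt_id x).const_mul (-2)
    have := h1.mul (sg_hasDeriv_exp x)
    refine this.congr_deriv ?_; ring
  · exact hint2.sub hinte
  · have h4 : Tendsto (fun x : ℝ => -2 * (x * Real.exp (-x ^ 2 / 2))) atTop (nhds 0) := by
      simpa using sg_tendsto_xexp.const_mul (-2)
    exact h4.congr fun x => by ring

lemma sg_Ioo_split {p q : ℝ} (hpq : p < q) {h : ℝ → ℝ} (hint : IntegrableOn h (Ioi p)) :
    ∫ x in Ioo p q, h x = (∫ x in Ioi p, h x) - ∫ x in Ioi q, h x := by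
  have hu : Ioi p = Ioo p q ∪ Ici q := (Ioo_union_Ici_eq_Ioi hpq).symm
  have hdisj : Disjoint (Ioo p q) (Ici q) := by
    rw [Set.disjoint_left]
    rintro x ⟨_, h2⟩ h3
    exact absurd h3 (not_le.mpr h2)
  have hsub : Ici q ⊆ Ioi p := fun x hx => lt_of_lt_of_le hpq hx
  rw [hu, setIntegral_union hdisj measurableSet_Ici
    (hint.mono_set Ioo_subset_Ioi_self) (hint.mono_set hsub), integral_Ici_eq_integral_Ioi]
  ring

lemma sg_refl_Ioo {p q : ℝ} (hpq : p ≤ q) (h : ℝ → ℝ) :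
    ∫ x in Ioo (-q) (-p), h x = ∫ x in Ioo p q, h (-x) := by
  rw [← integral_Ioc_eq_integral_Ioo, ← integral_Ioc_eq_integral_Ioo,
    ← intervalIntegral.integral_of_le (neg_le_neg hpq),
    ← intervalIntegral.integral_of_le hpq,
    ← intervalIntegral.integral_comp_neg (fun x => h x)]

lemma sg_intOn_2xexp (p : ℝ) :
    IntegrableOn (fun t : ℝ => 2 * t * Real.exp (-t ^ 2 / 2)) (Ioi p) := by
  have he : (fun t : ℝ => 2 * t * Real.exp (-t ^ 2 / 2))
      = fun t : ℝ => 2 * (t * Real.exp (-t ^ 2 / 2)) := by funext t; ring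
  rw [he]; exact (sg_int_xexp.const_mul 2).integrableOn

lemma sg_intOn_2x2exp (p : ℝ) :
    IntegrableOn (fun t : ℝ => 2 * t ^ 2 * Real.exp (-t ^ 2 / 2)) (Ioi p) := by
  have he : (fun t : ℝ => 2 * t ^ 2 * Real.exp (-t ^ 2 / 2))
      = fun t : ℝ => 2 * (t ^ 2 * Real.exp (-t ^ 2 / 2)) := by funext t; ring
  rw [he]; exact (sg_int_x2exp.const_mul 2).integrableOn

set_option maxHeartbeats 1000000 in
theorem stmt1
    (a z c₀ : ℝ)
    (ha : Real.sqrt (2 * Real.log 2) < a) (hHa : Hfun a = Bconst)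
    (hz : gaussTail z = 2 * Real.exp (-a ^ 2 / 2))
    (hc₀ : c₀ = Bconst / stdNormalPDF z)
    (c : ℝ) (hc_pos : 0 < c) (hc_lt : c < c₀) :
    ∃ ν : Measure ℝ, IsProbabilityMeasure ν ∧
      Integrable (fun x => x) ν ∧
      (∫ x, x ∂ν) = 0 ∧
      (∀ t : ℝ, 0 ≤ t →
        ν {x | t < |x|} ≤ ENNReal.ofReal (min 1 (2 * Real.exp (-t ^ 2 / 2)))) ∧
      (∫ x, max (c * x - c * z) 0 ∂(gaussianReal 0 1)) < ∫ x, max (x - c * z) 0 ∂ν := by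
  have hat0 : sgT0 < a := ha
  have ha1 : 1 < a := lt_trans one_lt_sgT0 hat0
  have ha0 : 0 < a := lt_trans zero_lt_one ha1
  -- the density and the measure
  set f0 : ℝ → ℝ := fun x => 2 * |x| * Real.exp (-x ^ 2 / 2) with hf0
  set S : Set ℝ := Ioi a ∪ Ioo (-a) (-sgT0) with hS
  have hSmeas : MeasurableSet S := measurableSet_Ioi.union measurableSet_Ioo
  set gg : ℝ → ℝ := S.indicator f0 with hgg
  have hf0nn : ∀ x, 0 ≤ f0 x := fun x => by simp only [hf0]; positivity
  have hggnn : ∀ x, 0 ≤ gg x := fun x => Set.indicator_nonneg (fun y _ => hf0nn y) x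
  have hf0meas : Measurable f0 := by
    simp only [hf0]; fun_prop
  have hggmeas : Measurable gg := hf0meas.indicator hSmeas
  have hggle : ∀ x, gg x ≤ f0 x := fun x =>
    Set.indicator_le_self' (fun y _ => hf0nn y) x
  set d : ℝ → ℝ≥0 := fun x => (gg x).toNNReal with hd
  have hdmeas : Measurable d := hggmeas.real_toNNReal
  set ν : Measure ℝ := volume.withDensity (fun x => (d x : ℝ≥0∞)) with hν
  have hcoe : ∀ x, ((d x : ℝ≥0) : ℝ) = gg x := fun x => Real.coe_toNNReal _ (hggnn x)
  have hdofReal : ∀ x, ((d x : ℝ≥0) : ℝ≥0∞) = ENNReal.ofReal (gg x) := fun x => rfl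
  -- integrability of the density
  have hIntf0 : Integrable f0 := by
    have h := sg_int_absxexp.const_mul 2
    refine h.congr (Eventually.of_forall fun x => ?_)
    show 2 * (|x| * Real.exp (-x ^ 2 / 2)) = f0 x
    simp only [hf0]; ring
  have hIntgg : Integrable gg := by
    refine hIntf0.mono' hggmeas.aestronglyMeasurable (Eventually.of_forall fun x => ?_)
    rw [Real.norm_eq_abs, abs_of_nonneg (hggnn x)]; exact hggle x
  -- reduction of ν-integration to Lebesgue integration
  have hInt_eq : ∀ g : ℝ → ℝ, ∫ x, g x ∂ν = ∫ x, gg x * g x := by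
    intro g
    rw [hν, integral_withDensity_eq_integral_smul hdmeas]
    congr 1; funext x
    rw [NNReal.smul_def, smul_eq_mul, hcoe]
  have hInt_iff : ∀ g : ℝ → ℝ, Integrable (fun x => gg x * g x) → Integrable g ν := by
    intro g hg
    rw [hν, integrable_withDensity_iff_integrable_smul hdmeas]
    refine hg.congr (Eventually.of_forall fun x => ?_)
    show gg x * g x = d x • g x
    rw [NNReal.smul_def, smul_eq_mul, hcoe]
  have hofReal : ∀ E : Set ℝ, MeasurableSet E →
      ν E = ENNReal.ofReal (∫ x in E, gg x) := by
    intro E hE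
    rw [hν, withDensity_apply _ hE]
    rw [ofReal_integral_eq_lintegral_ofReal hIntgg.integrableOn (ae_of_all _ hggnn)]
    rfl
  -- the two basic pieces of S
  have hrefl : ∀ (h : ℝ → ℝ), ∫ x in Ioo (-a) (-sgT0), h x = ∫ x in Ioo sgT0 a, h (-x) :=
    fun h => sg_refl_Ioo (le_of_lt hat0) h
  have hIoiA_f0 : ∫ x in Ioi a, f0 x = 2 * Real.exp (-a ^ 2 / 2) := by
    have h1 : EqOn f0 (fun x => 2 * x * Real.exp (-x ^ 2 / 2)) (Ioi a) := fun x hx => by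
      simp only [hf0]; rw [abs_of_pos (lt_trans ha0 hx)]
    rw [setIntegral_congr_fun measurableSet_Ioi h1]
    exact sg_I1 a
  have hIooNeg_f0 : ∫ x in Ioo (-a) (-sgT0), f0 x = 1 - 2 * Real.exp (-a ^ 2 / 2) := by
    rw [hrefl f0]
    have h1 : EqOn (fun x => f0 (-x)) (fun x => 2 * x * Real.exp (-x ^ 2 / 2))
        (Ioo sgT0 a) := fun x hx => by
      simp only [hf0, abs_neg, neg_sq]
      rw [abs_of_pos (lt_trans sgT0_pos hx.1)]
    rw [setIntegral_congr_fun measurableSet_Ioo h1,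
      sg_Ioo_split hat0 (sg_intOn_2xexp sgT0), sg_I1 sgT0, sg_I1 a, sg_exp_t0]
    norm_num
  have hS_disj : Disjoint (Ioi a) (Ioo (-a) (-sgT0)) := by
    rw [Set.disjoint_left]
    rintro x hx ⟨_, h2⟩
    have h3 := sgT0_pos
    have h4 : a < x := hx
    linarith
  have hIntMass : ∫ x, gg x = 1 := by
    rw [hgg, integral_indicator hSmeas, hS,
      setIntegral_union hS_disj measurableSet_Ioo hIntf0.integrableOn hIntf0.integrableOn,
      hIoiA_f0, hIooNeg_f0]
    ring
  have hprob : IsProbabilityMeasure ν := by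
    constructor
    rw [hofReal univ MeasurableSet.univ, setIntegral_univ, hIntMass, ENNReal.ofReal_one]
  -- mean zero
  have hIntf0x : Integrable (fun x => f0 x * x) := by
    have hdom : Integrable (fun x : ℝ => 2 * (x ^ 2 * Real.exp (-x ^ 2 / 2))) :=
      sg_int_x2exp.const_mul 2
    refine hdom.mono' ((hf0meas.mul measurable_id).aestronglyMeasurable)
      (Eventually.of_forall fun x => ?_)
    have h2 : |x| * |x| = x ^ 2 := by rw [← abs_mul, abs_mul_self]; ring
    rw [Real.norm_eq_abs, abs_mul, abs_of_nonneg (hf0nn x)]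
    simp only [hf0]
    exact le_of_eq (by linear_combination 2 * Real.exp (-x ^ 2 / 2) * h2)
  have hIntggx : Integrable (fun x => gg x * x) := by
    have hdom : Integrable (fun x : ℝ => 2 * (x ^ 2 * Real.exp (-x ^ 2 / 2))) :=
      sg_int_x2exp.const_mul 2
    refine hdom.mono' (hggmeas.mul measurable_id).aestronglyMeasurable
      (Eventually.of_forall fun x => ?_)
    have h2 : |x| * |x| = x ^ 2 := by rw [← abs_mul, abs_mul_self]; ring
    rw [Real.norm_eq_abs, abs_mul]
    have hstep : |gg x| ≤ 2 * |x| * Real.exp (-x ^ 2 / 2) := by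
      rw [abs_of_nonneg (hggnn x)]; simpa only [hf0] using hggle x
    calc |gg x| * |x| ≤ (2 * |x| * Real.exp (-x ^ 2 / 2)) * |x| :=
          mul_le_mul_of_nonneg_right hstep (abs_nonneg x)
      _ = 2 * (x ^ 2 * Real.exp (-x ^ 2 / 2)) := by
          linear_combination 2 * Real.exp (-x ^ 2 / 2) * h2
  have hIntId : Integrable (fun x : ℝ => x) ν := hInt_iff _ hIntggx
  have hBdef : Bconst = sgT0 / 2 + ∫ t in Ioi sgT0, Real.exp (-t ^ 2 / 2) := rfl
  have hHdef : Hfun a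
      = 2 * a * Real.exp (-a ^ 2 / 2) + 2 * ∫ t in Ioi a, Real.exp (-t ^ 2 / 2) := rfl
  have hIoiA_x : ∫ x in Ioi a, f0 x * x = Bconst := by
    have h1 : EqOn (fun x => f0 x * x) (fun x => 2 * x ^ 2 * Real.exp (-x ^ 2 / 2))
        (Ioi a) := fun x hx => by
      simp only [hf0]; rw [abs_of_pos (lt_trans ha0 hx)]; ring
    rw [setIntegral_congr_fun measurableSet_Ioi h1, sg_I2 a, ← hHa, hHdef]
  have hIooNeg_x : ∫ x in Ioo (-a) (-sgT0), f0 x * x = -Bconst := by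
    rw [hrefl (fun x => f0 x * x)]
    have h1 : EqOn (fun x => f0 (-x) * (-x))
        (fun x => -(2 * x ^ 2 * Real.exp (-x ^ 2 / 2))) (Ioo sgT0 a) := fun x hx => by
      simp only [hf0, abs_neg, neg_sq]
      rw [abs_of_pos (lt_trans sgT0_pos hx.1)]; ring
    rw [setIntegral_congr_fun measurableSet_Ioo h1, integral_neg,
      sg_Ioo_split hat0 (sg_intOn_2x2exp sgT0), sg_I2 sgT0, sg_I2 a, sg_exp_t0]
    have hH : 2 * a * Real.exp (-a ^ 2 / 2) + 2 * ∫ t in Ioi a, Real.exp (-t ^ 2 / 2)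
        = Bconst := by rw [← hHa, hHdef]
    rw [hBdef] at hH ⊢
    linarith
  have hMean : (∫ x, x ∂ν) = 0 := by
    rw [hInt_eq (fun x => x)]
    have h0 : (fun x => gg x * x) = S.indicator (fun x => f0 x * x) := by
      funext x
      by_cases hx : x ∈ S
      · rw [hgg, Set.indicator_of_mem hx, Set.indicator_of_mem hx]
      · rw [hgg, Set.indicator_of_notMem hx, Set.indicator_of_notMem hx, zero_mul]
    rw [h0, integral_indicator hSmeas, hS,
      setIntegral_union hS_disj measurableSet_Ioo hIntf0x.integrableOn hIntf0x.integrableOn,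
      hIoiA_x, hIooNeg_x]
    ring
  -- tail bound
  have hTail : ∀ t : ℝ, 0 ≤ t →
      ν {x | t < |x|} ≤ ENNReal.ofReal (min 1 (2 * Real.exp (-t ^ 2 / 2))) := by
    intro t htnn
    have hEmeas : MeasurableSet {x : ℝ | t < |x|} :=
      measurableSet_lt measurable_const continuous_abs.measurable
    rcases le_or_gt t sgT0 with hts | hts
    · have hmin : min (1:ℝ) (2 * Real.exp (-t ^ 2 / 2)) = 1 := by
        refine min_eq_left ?_
        have h1 : Real.exp (-sgT0 ^ 2 / 2) ≤ Real.exp (-t ^ 2 / 2) := by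
          apply Real.exp_le_exp.mpr
          nlinarith [pow_le_pow_left₀ htnn hts 2]
        rw [sg_exp_t0] at h1; linarith
      rw [hmin, ENNReal.ofReal_one]
      calc ν {x | t < |x|} ≤ ν univ := measure_mono (subset_univ _)
        _ = 1 := hprob.measure_univ
    · have h2le1 : 2 * Real.exp (-t ^ 2 / 2) ≤ 1 := by
        have h1 : Real.exp (-t ^ 2 / 2) ≤ Real.exp (-sgT0 ^ 2 / 2) := by
          apply Real.exp_le_exp.mpr
          nlinarith [pow_le_pow_left₀ (le_of_lt sgT0_pos) (le_of_lt hts) 2]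
        rw [sg_exp_t0] at h1; linarith
      rw [min_eq_right h2le1, hofReal _ hEmeas]
      apply ENNReal.ofReal_le_ofReal
      have hEg : ∫ x in {x : ℝ | t < |x|}, gg x = ∫ x in {x : ℝ | t < |x|} ∩ S, f0 x := by
        rw [hgg, setIntegral_indicator hSmeas]
      rcases lt_or_ge t a with hta | hta
      · have hset : {x : ℝ | t < |x|} ∩ S = Ioi a ∪ Ioo (-a) (-t) := by
          ext x
          constructor
          · rintro ⟨hx1, hx2 | hx3⟩
            · exact Or.inl hx2
            · right
              obtain ⟨h4, h5⟩ := hx3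
              have hxneg : x < 0 := by have := sgT0_pos; linarith
              have hx1' : t < |x| := hx1
              rw [abs_of_neg hxneg] at hx1'
              exact ⟨h4, by linarith⟩
          · rintro (hx | hx)
            · have hx' : a < x := hx
              refine ⟨?_, Or.inl hx⟩
              show t < |x|
              rw [abs_of_pos (lt_trans ha0 hx')]
              linarith
            · obtain ⟨h4, h5⟩ := hx
              have hxneg : x < 0 := by linarith
              refine ⟨?_, Or.inr ⟨h4, by linarith⟩⟩
              show t < |x|
              rw [abs_of_neg hxneg]; linarith
        have hdisj2 : Disjoint (Ioi a) (Ioo (-a) (-t)) := by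
          rw [Set.disjoint_left]
          rintro x hx ⟨_, h2⟩
          have h4 : a < x := hx
          linarith
        rw [hEg, hset,
          setIntegral_union hdisj2 measurableSet_Ioo hIntf0.integrableOn hIntf0.integrableOn,
          hIoiA_f0, sg_refl_Ioo (le_of_lt hta) f0]
        have h1 : EqOn (fun x => f0 (-x)) (fun x => 2 * x * Real.exp (-x ^ 2 / 2))
            (Ioo t a) := fun x hx => by
          simp only [hf0, abs_neg, neg_sq]
          rw [abs_of_pos (lt_trans (lt_of_le_of_lt (le_of_lt sgT0_pos) hts) hx.1)]
        rw [setIntegral_congr_fun measurableSet_Ioo h1,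
          sg_Ioo_split hta (sg_intOn_2xexp t), sg_I1 t, sg_I1 a]
        linarith
      · have hset : {x : ℝ | t < |x|} ∩ S = Ioi t := by
          ext x
          constructor
          · rintro ⟨hx1, hx2 | hx3⟩
            · have hx' : a < x := hx2
              have : t < |x| := hx1
              rw [abs_of_pos (lt_trans ha0 hx')] at this
              exact this
            · exfalso
              obtain ⟨h4, h5⟩ := hx3
              have hxneg : x < 0 := by have := sgT0_pos; linarith
              have : t < |x| := hx1
              rw [abs_of_neg hxneg] at this
              linarith
          · intro hx
            have hx' : a < x := lt_of_le_of_lt hta hx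
            refine ⟨?_, Or.inl hx'⟩
            show t < |x|
            rw [abs_of_pos (lt_trans ha0 hx')]
            exact hx
        rw [hEg, hset]
        have h1 : EqOn f0 (fun x => 2 * x * Real.exp (-x ^ 2 / 2)) (Ioi t) := fun x hx => by
          simp only [hf0]
          rw [abs_of_pos (lt_trans (lt_of_lt_of_le ha0 hta) hx)]
        rw [setIntegral_congr_fun measurableSet_Ioi h1, sg_I1 t]
  -- the Gaussian expectation
  have hstdint : Integrable stdNormalPDF := by
    have h := sg_int_exp.const_mul (Real.sqrt (2 * Real.pi))⁻¹
    exact h.congr (Eventually.of_forall fun x => rfl)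
  have hxe : ∫ x in Ioi z, x * Real.exp (-x ^ 2 / 2) = Real.exp (-z ^ 2 / 2) := by
    have h := sg_I1 z
    have h2 : ∫ t in Ioi z, 2 * t * Real.exp (-t ^ 2 / 2)
        = 2 * ∫ t in Ioi z, t * Real.exp (-t ^ 2 / 2) := by
      rw [← integral_const_mul]
      exact setIntegral_congr_fun measurableSet_Ioi fun x _ => by ring
    rw [h2] at h; linarith
  have hGauss : ∫ x, max (c * x - c * z) 0 ∂(gaussianReal 0 1)
      = c * stdNormalPDF z - c * z * gaussTail z := by
    have hmeq : (gaussianReal 0 1 : Measure ℝ)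
        = volume.withDensity (fun x => ((Real.toNNReal (gaussianPDFReal 0 1 x)) : ℝ≥0∞)) := by
      rw [gaussianReal_of_var_ne_zero 0 one_ne_zero]; rfl
    rw [hmeq, integral_withDensity_eq_integral_smul
      ((measurable_gaussianPDFReal 0 1).real_toNNReal)]
    have hpdf : ∀ x : ℝ, ((Real.toNNReal (gaussianPDFReal 0 1 x)) : ℝ) = stdNormalPDF x := by
      intro x
      rw [Real.coe_toNNReal _ (gaussianPDFReal_nonneg 0 1 x)]
      simp only [gaussianPDFReal, stdNormalPDF]
      norm_num
    have hfun : (fun x => (Real.toNNReal (gaussianPDFReal 0 1 x)) • max (c * x - c * z) 0)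
        = (Ioi z).indicator (fun x =>
            c * ((Real.sqrt (2 * Real.pi))⁻¹ * (x * Real.exp (-x ^ 2 / 2)))
              - (c * z) * stdNormalPDF x) := by
      funext x
      show (Real.toNNReal (gaussianPDFReal 0 1 x)) • max (c * x - c * z) 0 = _
      rw [NNReal.smul_def, smul_eq_mul, hpdf]
      by_cases hx : x ∈ Ioi z
      · rw [Set.indicator_of_mem hx]
        have hxz : z < x := hx
        rw [max_eq_left (by nlinarith : (0:ℝ) ≤ c * x - c * z)]
        simp only [stdNormalPDF]; ring
      · rw [Set.indicator_of_notMem hx]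
        have hxz : ¬ z < x := hx
        push_neg at hxz
        rw [max_eq_right (by nlinarith : c * x - c * z ≤ (0:ℝ)), mul_zero]
    rw [hfun, integral_indicator measurableSet_Ioi]
    have hint1 : IntegrableOn
        (fun x => c * ((Real.sqrt (2 * Real.pi))⁻¹ * (x * Real.exp (-x ^ 2 / 2)))) (Ioi z) :=
      ((sg_int_xexp.const_mul _).const_mul c).integrableOn
    have hint2 : IntegrableOn (fun x => (c * z) * stdNormalPDF x) (Ioi z) :=
      (hstdint.const_mul _).integrableOn
    rw [integral_sub hint1 hint2, integral_const_mul, integral_const_mul, integral_const_mul,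
      hxe]
    have hgt : gaussTail z = ∫ t in Ioi z, stdNormalPDF t := rfl
    rw [← hgt]
    simp only [stdNormalPDF]
  -- lower bound for the ν-expectation
  set u : ℝ := c * z with hu
  have hMint : Integrable (fun x : ℝ =>
      2 * (x ^ 2 * Real.exp (-x ^ 2 / 2)) + (2 * |u|) * (|x| * Real.exp (-x ^ 2 / 2))) :=
    (sg_int_x2exp.const_mul 2).add (sg_int_absxexp.const_mul (2 * |u|))
  have hMbound : ∀ x : ℝ, (2 * |x| * Real.exp (-x ^ 2 / 2)) * |x - u|
      ≤ 2 * (x ^ 2 * Real.exp (-x ^ 2 / 2)) + (2 * |u|) * (|x| * Real.exp (-x ^ 2 / 2)) := by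
    intro x
    have h2 : |x| * |x| = x ^ 2 := by rw [← abs_mul, abs_mul_self]; ring
    have h3 : |x - u| ≤ |x| + |u| := by
      calc |x - u| = |x + -u| := by rw [sub_eq_add_neg]
        _ ≤ |x| + |-u| := abs_add_le _ _
        _ = |x| + |u| := by rw [abs_neg]
    have h4 : (0:ℝ) ≤ 2 * |x| * Real.exp (-x ^ 2 / 2) := by positivity
    calc (2 * |x| * Real.exp (-x ^ 2 / 2)) * |x - u|
        ≤ (2 * |x| * Real.exp (-x ^ 2 / 2)) * (|x| + |u|) :=
          mul_le_mul_of_nonneg_left h3 h4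
      _ = 2 * (x ^ 2 * Real.exp (-x ^ 2 / 2)) + (2 * |u|) * (|x| * Real.exp (-x ^ 2 / 2)) := by
          linear_combination 2 * Real.exp (-x ^ 2 / 2) * h2
  have hmaxmeas : Measurable fun x : ℝ => max (x - u) 0 :=
    (measurable_id.sub measurable_const).max measurable_const
  have hIntMax : Integrable (fun x => gg x * max (x - u) 0) := by
    refine hMint.mono' (hggmeas.mul hmaxmeas).aestronglyMeasurable
      (Eventually.of_forall fun x => ?_)
    rw [Real.norm_eq_abs, abs_mul]
    refine le_trans ?_ (hMbound x)
    have hstep : |gg x| ≤ 2 * |x| * Real.exp (-x ^ 2 / 2) := by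
      rw [abs_of_nonneg (hggnn x)]; simpa only [hf0] using hggle x
    have hstep2 : |max (x - u) 0| ≤ |x - u| := by
      rw [abs_of_nonneg (le_max_right _ _)]
      exact max_le (le_abs_self _) (abs_nonneg _)
    exact mul_le_mul hstep hstep2 (abs_nonneg _) (by positivity)
  set L : ℝ → ℝ := (Ioi a).indicator (fun x => 2 * x * Real.exp (-x ^ 2 / 2) * (x - u))
    with hL
  have hLmeas : Measurable L := by
    rw [hL]
    exact (by fun_prop : Measurable fun x : ℝ =>
      2 * x * Real.exp (-x ^ 2 / 2) * (x - u)).indicator measurableSet_Ioi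
  have hIntL : Integrable L := by
    refine hMint.mono' hLmeas.aestronglyMeasurable (Eventually.of_forall fun x => ?_)
    rw [Real.norm_eq_abs, hL]
    by_cases hx : x ∈ Ioi a
    · rw [Set.indicator_of_mem hx]
      refine le_trans (le_of_eq ?_) ((hMbound x).trans (le_refl _))
      rw [abs_mul, abs_mul, abs_mul, abs_of_nonneg (by norm_num : (0:ℝ) ≤ 2),
        abs_of_pos (Real.exp_pos _)]
    · rw [Set.indicator_of_notMem hx, abs_zero]
      positivity
  have hptwise : ∀ x, L x ≤ gg x * max (x - u) 0 := by
    intro x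
    by_cases hx : x ∈ Ioi a
    · rw [hL, Set.indicator_of_mem hx]
      have hx0 : 0 < x := lt_trans ha0 hx
      have hgx : gg x = 2 * x * Real.exp (-x ^ 2 / 2) := by
        rw [hgg, Set.indicator_of_mem (Set.mem_union_left _ hx)]
        simp only [hf0]; rw [abs_of_pos hx0]
      have hle : x - u ≤ max (x - u) 0 := le_max_left _ _
      have hpos : (0:ℝ) ≤ 2 * x * Real.exp (-x ^ 2 / 2) :=
        mul_nonneg (by nlinarith) (Real.exp_pos _).le
      calc 2 * x * Real.exp (-x ^ 2 / 2) * (x - u)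
          ≤ 2 * x * Real.exp (-x ^ 2 / 2) * max (x - u) 0 :=
            mul_le_mul_of_nonneg_left hle hpos
        _ = gg x * max (x - u) 0 := by rw [hgx]
    · rw [hL, Set.indicator_of_notMem hx]
      exact mul_nonneg (hggnn x) (le_max_right _ _)
  have hLval : ∫ x, L x = Bconst - u * (2 * Real.exp (-a ^ 2 / 2)) := by
    rw [hL, integral_indicator measurableSet_Ioi]
    have heq : EqOn (fun x => 2 * x * Real.exp (-x ^ 2 / 2) * (x - u))
        (fun x => 2 * x ^ 2 * Real.exp (-x ^ 2 / 2) - u * (2 * x * Real.exp (-x ^ 2 / 2)))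
        (Ioi a) := fun x _ => by ring
    rw [setIntegral_congr_fun measurableSet_Ioi heq,
      integral_sub (sg_intOn_2x2exp a) ((sg_intOn_2xexp a).const_mul u),
      integral_const_mul, sg_I2 a, sg_I1 a, ← hHa, hHdef]
  have hfinal : Bconst - u * (2 * Real.exp (-a ^ 2 / 2)) ≤ ∫ x, max (x - u) 0 ∂ν := by
    rw [hInt_eq (fun x => max (x - u) 0), ← hLval]
    exact integral_mono hIntL hIntMax hptwise
  refine ⟨ν, hprob, hIntId, hMean, hTail, ?_⟩
  have hφpos : 0 < stdNormalPDF z := by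
    have h1 : 0 < Real.sqrt (2 * Real.pi) := Real.sqrt_pos.mpr (by positivity)
    simp only [stdNormalPDF]
    positivity
  have hcφ : c * stdNormalPDF z < Bconst := by
    rw [hc₀] at hc_lt
    exact (lt_div_iff₀ hφpos).mp hc_lt
  rw [hGauss, hz]
  linarith [hfinal]
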